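/- The complete local ring k[[u^{-2}, u^{-1}+vu^{-4}P, v^2u^{-2}, v^2u^{-3}, v^3u^{-3}, v^3u^{-4}]] is isomorphic to k[[x,y,z]]/(y^3 + z^2), via x = u^{-1}+vu^{-4}P, y = v^2u^{-2}, z = v^3u^{-3}; in particular it is a complete intersection. -/

import Mathlib

set_option synthInstance.maxHeartbeats 400000

set_option linter.unusedSectionVars false
namespace Stmt9Aux

open MvPowerSeries Finsupp

variable {k : Type} [CommRing k]

section Weight

variable {σ : Type} [DecidableEq σ] [Fintype σ]

/-- weighted degree of an exponent -/
def wtd (κ : σ → ℕ) (e : σ →₀ ℕ) : ℕ := ∑ i, κ i * e i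

lemma wtd_add (κ : σ → ℕ) (a b : σ →₀ ℕ) : wtd κ (a + b) = wtd κ a + wtd κ b := by
  simp [wtd, Finsupp.add_apply, Nat.mul_add, Finset.sum_add_distrib]

/-- `VB κ n F` : all monomials of `F` have weighted degree `≥ n`. -/
def VB (κ : σ → ℕ) (n : ℕ) (F : MvPowerSeries σ k) : Prop :=
  ∀ e, wtd κ e < n → coeff (R := k) e F = 0

lemma VB_mono {κ : σ → ℕ} {a b : ℕ} (h : a ≤ b) {F : MvPowerSeries σ k}
    (hF : VB κ b F) : VB κ a F := fun e he => hF e (lt_of_lt_of_le he h)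

lemma VB_zero' (κ : σ → ℕ) (F : MvPowerSeries σ k) : VB κ 0 F := fun _ he => absurd he (by omega)

lemma VB_add {κ : σ → ℕ} {n : ℕ} {F G : MvPowerSeries σ k} (hF : VB κ n F) (hG : VB κ n G) :
    VB κ n (F + G) := fun e he => by
  rw [map_add, hF e he, hG e he, add_zero]

lemma VB_monomial {κ : σ → ℕ} {n : ℕ} (d : σ →₀ ℕ) (a : k) (h : n ≤ wtd κ d) :
    VB κ n (monomial (R := k) d a) := by
  intro e he
  rw [coeff_monomial, if_neg]
  rintro rfl; omega

lemma VB_mul {κ : σ → ℕ} {a b : ℕ} {F G : MvPowerSeries σ k} (hF : VB κ a F) (hG : VB κ b G) :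
    VB κ (a + b) (F * G) := by
  intro e he
  rw [coeff_mul]
  refine Finset.sum_eq_zero fun p hp => ?_
  rw [Finset.HasAntidiagonal.mem_antidiagonal] at hp
  have hw : wtd κ p.1 + wtd κ p.2 = wtd κ e := by rw [← wtd_add, hp]
  by_cases h1 : wtd κ p.1 < a
  · rw [hF p.1 h1, zero_mul]
  · have h2 : wtd κ p.2 < b := by omega
    rw [hG p.2 h2, mul_zero]

lemma VB_pow {κ : σ → ℕ} {a : ℕ} {F : MvPowerSeries σ k} (hF : VB κ a F) (n : ℕ) :
    VB κ (n * a) (F ^ n) := by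
  induction n with
  | zero => rw [Nat.zero_mul]; exact VB_zero' κ (F ^ 0)
  | succ n ih =>
    have := VB_mul ih hF
    rw [pow_succ]
    rwa [show (n + 1) * a = n * a + a by ring]

end Weight
section Phi

variable (α₀ α₁ α₂ α₃ : k)

/-- abbreviation for the 2-variable power series ring -/
local notation "K2" => MvPowerSeries (Fin 2) k
local notation "K3" => MvPowerSeries (Fin 3) k

/-- the polynomial `g(s)` -/
noncomputable def gg : MvPowerSeries (Fin 2) k :=
  C (σ := Fin 2) (R := k) α₃ + C (σ := Fin 2) (R := k) α₂ * X 0 + C (σ := Fin 2) (R := k) α₁ * X 0 ^ 2 + C (σ := Fin 2) (R := k) α₀ * X 0 ^ 3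

/-- `x = s + m g(s)` -/
noncomputable def xx : MvPowerSeries (Fin 2) k := X 0 + X 1 * gg α₀ α₁ α₂ α₃

/-- the family of images of monomials -/
noncomputable def Wm (d : Fin 3 →₀ ℕ) : MvPowerSeries (Fin 2) k :=
  xx α₀ α₁ α₂ α₃ ^ d 0 * X 1 ^ (2 * d 1 + 3 * d 2)

lemma Wm_zero : Wm α₀ α₁ α₂ α₃ 0 = 1 := by simp [Wm]

lemma Wm_add (d d' : Fin 3 →₀ ℕ) :
    Wm α₀ α₁ α₂ α₃ (d + d') = Wm α₀ α₁ α₂ α₃ d * Wm α₀ α₁ α₂ α₃ d' := by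
  simp only [Wm, Finsupp.add_apply]
  rw [show 2 * (d 1 + d' 1) + 3 * (d 2 + d' 2) = (2 * d 1 + 3 * d 2) + (2 * d' 1 + 3 * d' 2) by
    ring, pow_add, pow_add]
  ring

/-- total-degree weight on two variables -/
def deg2 (e : Fin 2 →₀ ℕ) : ℕ := wtd (fun _ => 1) e

lemma deg2_eq (e : Fin 2 →₀ ℕ) : deg2 e = e 0 + e 1 := by
  simp [deg2, wtd, Fin.sum_univ_two]

lemma VB_xx : VB (k := k) (fun _ => (1 : ℕ)) 1 (xx α₀ α₁ α₂ α₃) := by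
  have h0 : VB (k := k) (fun _ => (1:ℕ)) 1 (X 0 : MvPowerSeries (Fin 2) k) := by
    rw [show (X 0 : MvPowerSeries (Fin 2) k) = monomial (R := k) (Finsupp.single 0 1) 1 from rfl]
    apply VB_monomial
    simp [wtd, Fin.sum_univ_two, Finsupp.single_apply]
  have h1 : VB (k := k) (fun _ => (1:ℕ)) 1 (X 1 * gg α₀ α₁ α₂ α₃ : MvPowerSeries (Fin 2) k) := by
    have hX : VB (k := k) (fun _ => (1:ℕ)) 1 (X 1 : MvPowerSeries (Fin 2) k) := by
      rw [show (X 1 : MvPowerSeries (Fin 2) k) = monomial (R := k) (Finsupp.single 1 1) 1 from rfl]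
      apply VB_monomial
      simp [wtd, Fin.sum_univ_two, Finsupp.single_apply]
    have := VB_mul hX (VB_zero' (fun _ => (1:ℕ)) (gg α₀ α₁ α₂ α₃))
    simpa using this
  exact VB_add h0 h1

lemma VB_m_pow (n : ℕ) : VB (k := k) (fun _ => (1 : ℕ)) n ((X 1 : MvPowerSeries (Fin 2) k) ^ n) := by
  have hX : VB (k := k) (fun _ => (1:ℕ)) 1 (X 1 : MvPowerSeries (Fin 2) k) := by
    rw [show (X 1 : MvPowerSeries (Fin 2) k) = monomial (R := k) (Finsupp.single 1 1) 1 from rfl]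
    apply VB_monomial
    simp [wtd, Fin.sum_univ_two, Finsupp.single_apply]
  simpa using VB_pow hX n

/-- weight of a 3-variable exponent -/
def wt3 (d : Fin 3 →₀ ℕ) : ℕ := d 0 + 2 * d 1 + 3 * d 2

lemma coeff_Wm_eq_zero {e : Fin 2 →₀ ℕ} {d : Fin 3 →₀ ℕ} (h : deg2 e < wt3 d) :
    coeff (R := k) e (Wm α₀ α₁ α₂ α₃ d) = 0 := by
  have h1 := VB_pow (VB_xx α₀ α₁ α₂ α₃) (d 0)
  have h2 := VB_m_pow (k := k) (2 * d 1 + 3 * d 2)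
  have := VB_mul h1 h2
  apply this
  simpa [wt3, Nat.mul_one, deg2] using lt_of_lt_of_le h (by simp [wt3]; omega)

-- the finite set of exponents that can contribute at degree ≤ N
noncomputable def DD (N : ℕ) : Finset (Fin 3 →₀ ℕ) := Finset.Iic (Finsupp.equivFunOnFinite.symm fun _ => N)

lemma mem_DD {N : ℕ} {d : Fin 3 →₀ ℕ} : d ∈ DD N ↔ ∀ i, d i ≤ N := by
  simp only [DD, Finset.mem_Iic, Finsupp.le_def, Finsupp.coe_equivFunOnFinite_symm]

lemma mem_DD_of_wt3 {N : ℕ} {d : Fin 3 →₀ ℕ} (h : wt3 d ≤ N) : d ∈ DD N := by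
  rw [mem_DD]
  intro i
  fin_cases i <;> simp [wt3] at h ⊢ <;> omega

lemma coeff_Wm_eq_zero_of_not_mem {e : Fin 2 →₀ ℕ} {d : Fin 3 →₀ ℕ}
    (h : d ∉ DD (deg2 e)) : coeff (R := k) e (Wm α₀ α₁ α₂ α₃ d) = 0 := by
  apply coeff_Wm_eq_zero
  rw [mem_DD] at h
  push_neg at h
  obtain ⟨i, hi⟩ := h
  have : d i ≤ wt3 d := by fin_cases i <;> simp [wt3] <;> omega
  omega

/-- the underlying function of the substitution map -/
noncomputable def phiFun (F : K3) : K2 :=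
  fun e => ∑ d ∈ DD (deg2 e), coeff (R := k) d F * coeff (R := k) e (Wm α₀ α₁ α₂ α₃ d)

lemma coeff_phiFun (F : K3) (e : Fin 2 →₀ ℕ) :
    coeff (R := k) e (phiFun α₀ α₁ α₂ α₃ F)
      = ∑ d ∈ DD (deg2 e), coeff (R := k) d F * coeff (R := k) e (Wm α₀ α₁ α₂ α₃ d) := rfl

lemma coeff_phiFun_eq_sum (F : K3) (e : Fin 2 →₀ ℕ) {T : Finset (Fin 3 →₀ ℕ)}
    (hT : DD (deg2 e) ⊆ T) :
    coeff (R := k) e (phiFun α₀ α₁ α₂ α₃ F)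
      = ∑ d ∈ T, coeff (R := k) d F * coeff (R := k) e (Wm α₀ α₁ α₂ α₃ d) := by
  rw [coeff_phiFun]
  apply Finset.sum_subset hT
  intro d _ hd
  rw [coeff_Wm_eq_zero_of_not_mem α₀ α₁ α₂ α₃ hd, mul_zero]
end Phi

section PhiHom

variable (α₀ α₁ α₂ α₃ : k)

lemma deg2_add (a b : Fin 2 →₀ ℕ) : deg2 (a + b) = deg2 a + deg2 b := by
  simp [deg2_eq, Finsupp.add_apply]; ring

lemma DD_mono {M N : ℕ} (h : M ≤ N) : DD M ⊆ DD N := by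
  intro d hd
  rw [mem_DD] at hd ⊢
  exact fun i => le_trans (hd i) h

lemma mem_DD_left {N : ℕ} {q : (Fin 3 →₀ ℕ) × (Fin 3 →₀ ℕ)} (h : q.1 + q.2 ∈ DD N) :
    q.1 ∈ DD N := by
  rw [mem_DD] at h ⊢
  intro i
  have := h i
  rw [Finsupp.add_apply] at this
  omega

lemma mem_DD_right {N : ℕ} {q : (Fin 3 →₀ ℕ) × (Fin 3 →₀ ℕ)} (h : q.1 + q.2 ∈ DD N) :
    q.2 ∈ DD N := by
  rw [mem_DD] at h ⊢
  intro i
  have := h i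
  rw [Finsupp.add_apply] at this
  omega

lemma phiFun_add (F G : MvPowerSeries (Fin 3) k) :
    phiFun α₀ α₁ α₂ α₃ (F + G) = phiFun α₀ α₁ α₂ α₃ F + phiFun α₀ α₁ α₂ α₃ G := by
  apply MvPowerSeries.ext; intro e
  rw [map_add, coeff_phiFun, coeff_phiFun, coeff_phiFun, ← Finset.sum_add_distrib]
  refine Finset.sum_congr rfl fun d _ => ?_
  rw [map_add, add_mul]

lemma phiFun_monomial (d : Fin 3 →₀ ℕ) (c : k) :
    phiFun α₀ α₁ α₂ α₃ (monomial (R := k) d c) = C (σ := Fin 2) (R := k) c * Wm α₀ α₁ α₂ α₃ d := by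
  apply MvPowerSeries.ext; intro e
  rw [coeff_phiFun, coeff_C_mul]
  by_cases hd : d ∈ DD (deg2 e)
  · rw [Finset.sum_eq_single d]
    · rw [coeff_monomial_same]
    · intro d' _ hne
      rw [coeff_monomial_ne hne, zero_mul]
    · intro h; exact absurd hd h
  · rw [coeff_Wm_eq_zero_of_not_mem α₀ α₁ α₂ α₃ hd, mul_zero]
    refine Finset.sum_eq_zero fun d' hd' => ?_
    rw [coeff_monomial_ne (fun h => hd (by rwa [← h])), zero_mul]

lemma phiFun_one : phiFun α₀ α₁ α₂ α₃ 1 = 1 := by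
  have h : (1 : MvPowerSeries (Fin 3) k) = monomial (R := k) 0 1 := by
    apply MvPowerSeries.ext; intro e
    rw [coeff_one, coeff_monomial]
  rw [h, phiFun_monomial, Wm_zero, map_one, one_mul]

lemma phiFun_mul (F G : MvPowerSeries (Fin 3) k) :
    phiFun α₀ α₁ α₂ α₃ (F * G)
      = phiFun α₀ α₁ α₂ α₃ F * phiFun α₀ α₁ α₂ α₃ G := by
  classical
  apply MvPowerSeries.ext; intro e
  set N := deg2 e with hN
  set f : (Fin 3 →₀ ℕ) × (Fin 3 →₀ ℕ) → k := fun q =>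
    coeff (R := k) q.1 F * coeff (R := k) q.2 G * coeff (R := k) e (Wm α₀ α₁ α₂ α₃ (q.1 + q.2)) with hf
  -- right hand side
  have hRHS : coeff (R := k) e (phiFun α₀ α₁ α₂ α₃ F * phiFun α₀ α₁ α₂ α₃ G)
      = ∑ q ∈ DD N ×ˢ DD N, f q := by
    have step1 : coeff (R := k) e (phiFun α₀ α₁ α₂ α₃ F * phiFun α₀ α₁ α₂ α₃ G)
        = ∑ p ∈ Finset.HasAntidiagonal.antidiagonal e, ∑ d1 ∈ DD N, ∑ d2 ∈ DD N,
            coeff (R := k) d1 F * coeff (R := k) d2 G *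
              (coeff (R := k) p.1 (Wm α₀ α₁ α₂ α₃ d1) * coeff (R := k) p.2 (Wm α₀ α₁ α₂ α₃ d2)) := by
      rw [coeff_mul]
      refine Finset.sum_congr rfl fun p hp => ?_
      rw [Finset.HasAntidiagonal.mem_antidiagonal] at hp
      have h1 : DD (deg2 p.1) ⊆ DD N := DD_mono (by rw [hN, ← hp, deg2_add]; omega)
      have h2 : DD (deg2 p.2) ⊆ DD N := DD_mono (by rw [hN, ← hp, deg2_add]; omega)
      rw [coeff_phiFun_eq_sum α₀ α₁ α₂ α₃ F p.1 h1, coeff_phiFun_eq_sum α₀ α₁ α₂ α₃ G p.2 h2,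
        Finset.sum_mul_sum]
      exact Finset.sum_congr rfl fun d1 _ => Finset.sum_congr rfl fun d2 _ => by ring
    rw [step1, Finset.sum_comm]
    refine Eq.trans (Finset.sum_congr rfl fun d1 _ => Finset.sum_comm) ?_
    rw [Finset.sum_product]
    refine Finset.sum_congr rfl fun d1 _ => Finset.sum_congr rfl fun d2 _ => ?_
    rw [← Finset.mul_sum, ← coeff_mul, ← Wm_add]
  rw [hRHS, coeff_phiFun]
  -- left hand side
  have step2 : ∑ d ∈ DD N, coeff (R := k) d (F * G) * coeff (R := k) e (Wm α₀ α₁ α₂ α₃ d)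
      = ∑ d ∈ DD N, ∑ q ∈ Finset.HasAntidiagonal.antidiagonal d, f q := by
    refine Finset.sum_congr rfl fun d _ => ?_
    rw [coeff_mul, Finset.sum_mul]
    refine Finset.sum_congr rfl fun q hq => ?_
    rw [Finset.HasAntidiagonal.mem_antidiagonal] at hq
    rw [hf]; dsimp only; rw [hq]
  rw [step2]
  have hdisj : (↑(DD N) : Set (Fin 3 →₀ ℕ)).PairwiseDisjoint Finset.HasAntidiagonal.antidiagonal := by
    intro d1 _ d2 _ hne
    refine Finset.disjoint_left.mpr fun q hq1 hq2 => ?_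
    rw [Finset.HasAntidiagonal.mem_antidiagonal] at hq1 hq2
    exact hne (hq1 ▸ hq2)
  rw [← Finset.sum_biUnion hdisj]
  apply Finset.sum_subset
  · intro q hq
    rw [Finset.mem_biUnion] at hq
    obtain ⟨d, hd, hqd⟩ := hq
    rw [Finset.HasAntidiagonal.mem_antidiagonal] at hqd
    rw [Finset.mem_product]
    exact ⟨mem_DD_left (hqd ▸ hd), mem_DD_right (hqd ▸ hd)⟩
  · intro q _ hq
    have hnot : q.1 + q.2 ∉ DD N := by
      intro hmem
      exact hq (Finset.mem_biUnion.mpr ⟨q.1 + q.2, hmem, Finset.HasAntidiagonal.mem_antidiagonal.mpr rfl⟩)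
    rw [hf]; dsimp only
    rw [coeff_Wm_eq_zero_of_not_mem α₀ α₁ α₂ α₃ hnot, mul_zero]

/-- the substitution ring homomorphism -/
noncomputable def Phi : MvPowerSeries (Fin 3) k →+* MvPowerSeries (Fin 2) k where
  toFun := phiFun α₀ α₁ α₂ α₃
  map_one' := phiFun_one α₀ α₁ α₂ α₃
  map_mul' := phiFun_mul α₀ α₁ α₂ α₃
  map_zero' := by
    apply MvPowerSeries.ext; intro e
    rw [coeff_phiFun, map_zero]
    exact Finset.sum_eq_zero fun d _ => by rw [map_zero, zero_mul]
  map_add' := phiFun_add α₀ α₁ α₂ α₃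

lemma Phi_monomial (d : Fin 3 →₀ ℕ) (c : k) :
    Phi α₀ α₁ α₂ α₃ (monomial (R := k) d c) = C (σ := Fin 2) (R := k) c * Wm α₀ α₁ α₂ α₃ d :=
  phiFun_monomial α₀ α₁ α₂ α₃ d c

lemma Phi_C (a : k) : Phi α₀ α₁ α₂ α₃ (C (σ := Fin 3) (R := k) a) = C (σ := Fin 2) (R := k) a := by
  have h : (C (σ := Fin 3) (R := k) a : MvPowerSeries (Fin 3) k) = monomial (R := k) 0 a := rfl
  rw [h, Phi_monomial, Wm_zero, mul_one]

lemma Phi_X0 : Phi α₀ α₁ α₂ α₃ (X 0 : MvPowerSeries (Fin 3) k) = xx α₀ α₁ α₂ α₃ := by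
  have h : (X 0 : MvPowerSeries (Fin 3) k) = monomial (R := k) (Finsupp.single 0 1) 1 := rfl
  rw [h, Phi_monomial, map_one, one_mul, Wm]
  rw [Finsupp.single_eq_same, Finsupp.single_eq_of_ne' (by decide : (0 : Fin 3) ≠ 1),
    Finsupp.single_eq_of_ne' (by decide : (0 : Fin 3) ≠ 2)]
  norm_num

lemma Phi_X1 : Phi α₀ α₁ α₂ α₃ (X 1 : MvPowerSeries (Fin 3) k)
    = (X 1 : MvPowerSeries (Fin 2) k) ^ 2 := by
  have h : (X 1 : MvPowerSeries (Fin 3) k) = monomial (R := k) (Finsupp.single 1 1) 1 := rfl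
  rw [h, Phi_monomial, map_one, one_mul, Wm]
  rw [Finsupp.single_eq_same, Finsupp.single_eq_of_ne' (by decide : (1 : Fin 3) ≠ 0),
    Finsupp.single_eq_of_ne' (by decide : (1 : Fin 3) ≠ 2)]
  norm_num

lemma Phi_X2 : Phi α₀ α₁ α₂ α₃ (X 2 : MvPowerSeries (Fin 3) k)
    = (X 1 : MvPowerSeries (Fin 2) k) ^ 3 := by
  have h : (X 2 : MvPowerSeries (Fin 3) k) = monomial (R := k) (Finsupp.single 2 1) 1 := rfl
  rw [h, Phi_monomial, map_one, one_mul, Wm]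
  rw [Finsupp.single_eq_same, Finsupp.single_eq_of_ne' (by decide : (2 : Fin 3) ≠ 0),
    Finsupp.single_eq_of_ne' (by decide : (2 : Fin 3) ≠ 1)]
  norm_num

end PhiHom
section Contraction

variable {σ : Type} [DecidableEq σ] (j : σ)

/-- two power series agree on all coefficients with `j`-exponent `< n` -/
def Agree (n : ℕ) (F G : MvPowerSeries σ k) : Prop :=
  ∀ e : σ →₀ ℕ, e j < n → coeff (R := k) e F = coeff (R := k) e G

lemma Agree_zero (F G : MvPowerSeries σ k) : Agree j 0 F G :=
  fun _ he => absurd he (by omega)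

lemma Agree_mono {a b : ℕ} (h : a ≤ b) {F G : MvPowerSeries σ k} (hFG : Agree j b F G) :
    Agree j a F G := fun e he => hFG e (by omega)

/-- if all low coefficients of `P` vanish, the same holds for `P * H` -/
lemma low_mul {n : ℕ} {P : MvPowerSeries σ k} (hP : ∀ e : σ →₀ ℕ, e j < n → coeff (R := k) e P = 0)
    (H : MvPowerSeries σ k) :
    ∀ e : σ →₀ ℕ, e j < n → coeff (R := k) e (P * H) = 0 := by
  intro e he
  rw [coeff_mul]
  refine Finset.sum_eq_zero fun q hq => ?_
  rw [Finset.HasAntidiagonal.mem_antidiagonal] at hq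
  have h1 : q.1 j + q.2 j = e j := by rw [← Finsupp.add_apply, hq]
  rw [hP q.1 (by omega), zero_mul]

/-- multiplying by `X j` raises the lower vanishing bound -/
lemma low_X_mul {n : ℕ} {P : MvPowerSeries σ k} (hP : ∀ e : σ →₀ ℕ, e j < n → coeff (R := k) e P = 0) :
    ∀ e : σ →₀ ℕ, e j < n + 1 → coeff (R := k) e ((X j : MvPowerSeries σ k) * P) = 0 := by
  intro e he
  have hX : (X j : MvPowerSeries σ k) = monomial (R := k) (Finsupp.single j 1) 1 := rfl
  rw [hX, coeff_monomial_mul]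
  split_ifs with hle
  · rw [Finsupp.single_le_iff] at hle
    rw [one_mul]
    apply hP
    rw [Finsupp.tsub_apply, Finsupp.single_eq_same]
    omega
  · rfl

/-- fixed points of coefficientwise contractions exist and are unique -/
lemma exists_fixedPoint (Ψ : MvPowerSeries σ k → MvPowerSeries σ k)
    (hΨ : ∀ n F G, Agree j n F G → Agree j (n + 1) (Ψ F) (Ψ G)) :
    ∃ T, Ψ T = T ∧ ∀ T', Ψ T' = T' → T' = T := by
  classical
  set T : MvPowerSeries σ k := fun e => coeff (R := k) e (Ψ^[e j + 1] 0) with hT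
  have coeffT : ∀ e : σ →₀ ℕ, coeff (R := k) e T = coeff (R := k) e (Ψ^[e j + 1] 0) := fun _ => rfl
  -- consecutive iterates agree
  have step : ∀ a : ℕ, Agree j a (Ψ^[a] 0) (Ψ^[a + 1] 0) := by
    intro a
    induction a with
    | zero => exact Agree_zero j _ _
    | succ a ih =>
      have := hΨ a _ _ ih
      rwa [← Function.iterate_succ_apply' Ψ a 0, ← Function.iterate_succ_apply' Ψ (a+1) 0] at this
  have chain : ∀ a b : ℕ, a ≤ b → Agree j a (Ψ^[a] 0) (Ψ^[b] 0) := by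
    intro a b hab
    induction b with
    | zero => have : a = 0 := by omega
              subst this; exact Agree_zero j _ _
    | succ b ih =>
      rcases Nat.lt_or_ge a (b + 1) with h | h
      · have h1 := ih (by omega)
        have h2 := Agree_mono j (show a ≤ b from by omega) (step b)
        exact fun e he => (h1 e he).trans (h2 e he)
      · have : a = b + 1 := by omega
        subst this
        exact fun e he => rfl
  have hTa : ∀ (a : ℕ) (e : σ →₀ ℕ), e j < a → coeff (R := k) e T = coeff (R := k) e (Ψ^[a] 0) := by
    intro a e he
    rw [coeffT]
    exact (chain (e j + 1) a (by omega) e (by omega)).symm ▸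
      (chain (e j + 1) a (by omega) e (by omega))
  have hfix : Ψ T = T := by
    apply MvPowerSeries.ext; intro e
    have hA : Agree j (e j) T (Ψ^[e j] 0) := fun e' he' => hTa (e j) e' he'
    have := hΨ (e j) T _ hA e (by omega)
    rw [this, ← Function.iterate_succ_apply' Ψ (e j) 0]
    exact (hTa (e j + 1) e (by omega)).symm
  refine ⟨T, hfix, ?_⟩
  intro T' hT'
  have key : ∀ n, Agree j n T' T := by
    intro n
    induction n with
    | zero => exact Agree_zero j _ _
    | succ n ih =>
      have := hΨ n T' T ih
      rwa [hT', hfix] at this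
  apply MvPowerSeries.ext; intro e
  exact key (e j + 1) e (by omega)

end Contraction
section FixT

variable (α₀ α₁ α₂ α₃ : k)

lemma C_inj {σ : Type} [DecidableEq σ] : Function.Injective (C (σ := σ) (R := k)) := by
  intro a b h
  have := congrArg (constantCoeff (σ := σ) (R := k)) h
  simpa using this

lemma two_eq_zero' {σ : Type} [DecidableEq σ] [CharP k 2] :
    (2 : MvPowerSeries σ k) = 0 := by
  haveI : CharP (MvPowerSeries σ k) 2 := charP_of_injective_ringHom (C_inj (σ := σ)) 2
  exact CharTwo.two_eq_zero

/-- the cubic `G` in three variables -/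
noncomputable def GG3 (F : MvPowerSeries (Fin 3) k) : MvPowerSeries (Fin 3) k :=
  (C (σ := Fin 3) (R := k) α₃) ^ 2 + (C (σ := Fin 3) (R := k) α₂) ^ 2 * F + (C (σ := Fin 3) (R := k) α₁) ^ 2 * F ^ 2
    + (C (σ := Fin 3) (R := k) α₀) ^ 2 * F ^ 3

/-- the contraction defining the preimage of `s²` -/
noncomputable def Psi3 (F : MvPowerSeries (Fin 3) k) : MvPowerSeries (Fin 3) k :=
  (X 0 : MvPowerSeries (Fin 3) k) ^ 2 + X 1 * GG3 α₀ α₁ α₂ α₃ F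

lemma Psi3_contr : ∀ n F G, Agree (k := k) (1 : Fin 3) n F G →
    Agree (1 : Fin 3) (n + 1) (Psi3 α₀ α₁ α₂ α₃ F) (Psi3 α₀ α₁ α₂ α₃ G) := by
  intro n F G hFG e he
  have hdiff : Psi3 α₀ α₁ α₂ α₃ F - Psi3 α₀ α₁ α₂ α₃ G
      = (X 1 : MvPowerSeries (Fin 3) k) * ((F - G) *
          ((C (σ := Fin 3) (R := k) α₂) ^ 2 + (C (σ := Fin 3) (R := k) α₁) ^ 2 * (F + G)
            + (C (σ := Fin 3) (R := k) α₀) ^ 2 * (F ^ 2 + F * G + G ^ 2))) := by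
    rw [Psi3, Psi3, GG3, GG3]; ring
  have hP : ∀ e' : Fin 3 →₀ ℕ, e' 1 < n → coeff (R := k) e' (F - G) = 0 := by
    intro e' he'
    rw [map_sub, hFG e' he', sub_self]
  have hz := low_X_mul (1 : Fin 3) (low_mul (1 : Fin 3) hP
    ((C (σ := Fin 3) (R := k) α₂) ^ 2 + (C (σ := Fin 3) (R := k) α₁) ^ 2 * (F + G)
      + (C (σ := Fin 3) (R := k) α₀) ^ 2 * (F ^ 2 + F * G + G ^ 2))) e he
  rw [← hdiff, map_sub, sub_eq_zero] at hz
  exact hz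

/-- the preimage of `s²` -/
noncomputable def TT : MvPowerSeries (Fin 3) k :=
  (exists_fixedPoint (1 : Fin 3) (Psi3 α₀ α₁ α₂ α₃) (Psi3_contr α₀ α₁ α₂ α₃)).choose

lemma TT_fixed : Psi3 α₀ α₁ α₂ α₃ (TT α₀ α₁ α₂ α₃) = TT α₀ α₁ α₂ α₃ :=
  (exists_fixedPoint (1 : Fin 3) (Psi3 α₀ α₁ α₂ α₃) (Psi3_contr α₀ α₁ α₂ α₃)).choose_spec.1

/-- the analogous contraction on two variables -/
noncomputable def GG2 (F : MvPowerSeries (Fin 2) k) : MvPowerSeries (Fin 2) k :=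
  (C (σ := Fin 2) (R := k) α₃) ^ 2 + (C (σ := Fin 2) (R := k) α₂) ^ 2 * F + (C (σ := Fin 2) (R := k) α₁) ^ 2 * F ^ 2
    + (C (σ := Fin 2) (R := k) α₀) ^ 2 * F ^ 3

noncomputable def Psi2 (F : MvPowerSeries (Fin 2) k) : MvPowerSeries (Fin 2) k :=
  xx α₀ α₁ α₂ α₃ ^ 2 + (X 1) ^ 2 * GG2 α₀ α₁ α₂ α₃ F

lemma Psi2_contr : ∀ n F G, Agree (k := k) (1 : Fin 2) n F G →
    Agree (1 : Fin 2) (n + 1) (Psi2 α₀ α₁ α₂ α₃ F) (Psi2 α₀ α₁ α₂ α₃ G) := by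
  intro n F G hFG e he
  have hdiff : Psi2 α₀ α₁ α₂ α₃ F - Psi2 α₀ α₁ α₂ α₃ G
      = (X 1 : MvPowerSeries (Fin 2) k) * ((X 1) * ((F - G) *
          ((C (σ := Fin 2) (R := k) α₂) ^ 2 + (C (σ := Fin 2) (R := k) α₁) ^ 2 * (F + G)
            + (C (σ := Fin 2) (R := k) α₀) ^ 2 * (F ^ 2 + F * G + G ^ 2)))) := by
    rw [Psi2, Psi2, GG2, GG2]; ring
  have hP : ∀ e' : Fin 2 →₀ ℕ, e' 1 < n → coeff (R := k) e' (F - G) = 0 := by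
    intro e' he'
    rw [map_sub, hFG e' he', sub_self]
  have h1 : ∀ e' : Fin 2 →₀ ℕ, e' 1 < n →
      coeff (R := k) e' ((X 1 : MvPowerSeries (Fin 2) k) * ((F - G) *
          ((C (σ := Fin 2) (R := k) α₂) ^ 2 + (C (σ := Fin 2) (R := k) α₁) ^ 2 * (F + G)
            + (C (σ := Fin 2) (R := k) α₀) ^ 2 * (F ^ 2 + F * G + G ^ 2)))) = 0 :=
    fun e' he' => low_X_mul (1 : Fin 2) (low_mul (1 : Fin 2) hP
      ((C (σ := Fin 2) (R := k) α₂) ^ 2 + (C (σ := Fin 2) (R := k) α₁) ^ 2 * (F + G)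
        + (C (σ := Fin 2) (R := k) α₀) ^ 2 * (F ^ 2 + F * G + G ^ 2))) e' (by omega)
  have hz := low_X_mul (1 : Fin 2) h1 e he
  rw [← hdiff, map_sub, sub_eq_zero] at hz
  exact hz

end FixT
section PhiTT

variable (α₀ α₁ α₂ α₃ : k)

lemma Psi2_fix_s2 [CharP k 2] :
    Psi2 α₀ α₁ α₂ α₃ ((X 0 : MvPowerSeries (Fin 2) k) ^ 2)
      = (X 0 : MvPowerSeries (Fin 2) k) ^ 2 := by
  have h2 : (2 : MvPowerSeries (Fin 2) k) = 0 := two_eq_zero'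
  rw [Psi2, GG2, xx, gg]
  set s : MvPowerSeries (Fin 2) k := X 0 with hs
  set m : MvPowerSeries (Fin 2) k := X 1 with hm
  set a0 : MvPowerSeries (Fin 2) k := C (σ := Fin 2) (R := k) α₀ with ha0
  set a1 : MvPowerSeries (Fin 2) k := C (σ := Fin 2) (R := k) α₁ with ha1
  set a2 : MvPowerSeries (Fin 2) k := C (σ := Fin 2) (R := k) α₂ with ha2
  set a3 : MvPowerSeries (Fin 2) k := C (σ := Fin 2) (R := k) α₃ with ha3
  linear_combination (m^2*a3^2 + s*m*a3 + s*m^2*a2*a3 + s^2*m*a2 + s^2*m^2*a2^2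
    + s^2*m^2*a1*a3 + s^3*m*a1 + s^3*m^2*a1*a2 + s^3*m^2*a0*a3 + s^4*m*a0
    + s^4*m^2*a1^2 + s^4*m^2*a0*a2 + s^5*m^2*a0*a1 + s^6*m^2*a0^2) * h2

lemma Phi_Psi3 (F : MvPowerSeries (Fin 3) k) :
    Phi α₀ α₁ α₂ α₃ (Psi3 α₀ α₁ α₂ α₃ F) = Psi2 α₀ α₁ α₂ α₃ (Phi α₀ α₁ α₂ α₃ F) := by
  rw [Psi3, GG3, Psi2, GG2]
  simp only [map_add, map_mul, map_pow, Phi_X0, Phi_X1, Phi_C]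

lemma Phi_TT [CharP k 2] :
    Phi α₀ α₁ α₂ α₃ (TT α₀ α₁ α₂ α₃) = (X 0 : MvPowerSeries (Fin 2) k) ^ 2 := by
  obtain ⟨T2, hfix, huniq⟩ :=
    exists_fixedPoint (1 : Fin 2) (Psi2 α₀ α₁ α₂ α₃) (Psi2_contr α₀ α₁ α₂ α₃)
  have h1 : Psi2 α₀ α₁ α₂ α₃ (Phi α₀ α₁ α₂ α₃ (TT α₀ α₁ α₂ α₃))
      = Phi α₀ α₁ α₂ α₃ (TT α₀ α₁ α₂ α₃) := by
    rw [← Phi_Psi3, TT_fixed]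
  exact (huniq _ h1).trans (huniq _ (Psi2_fix_s2 α₀ α₁ α₂ α₃)).symm

end PhiTT
section Preimages

variable (α₀ α₁ α₂ α₃ : k)

lemma constantCoeff_TT : constantCoeff (σ := Fin 3) (R := k) (TT α₀ α₁ α₂ α₃) = 0 := by
  conv_lhs => rw [← TT_fixed α₀ α₁ α₂ α₃]
  rw [Psi3]
  simp

/-- the unit `1 + (α₂ + α₀ T)² Y` -/
noncomputable def UU : MvPowerSeries (Fin 3) k :=
  1 + (C (σ := Fin 3) (R := k) α₂ + C (σ := Fin 3) (R := k) α₀ * TT α₀ α₁ α₂ α₃) ^ 2 * X 1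

lemma constantCoeff_UU : constantCoeff (σ := Fin 3) (R := k) (UU α₀ α₁ α₂ α₃) = 1 := by
  rw [UU]
  simp

/-- numerator for the preimage of `m²s` -/
noncomputable def DD3 : MvPowerSeries (Fin 3) k :=
  X 0 * X 1 + C (σ := Fin 3) (R := k) α₃ * X 2 + C (σ := Fin 3) (R := k) α₁ * X 2 * TT α₀ α₁ α₂ α₃
    + (C (σ := Fin 3) (R := k) α₂ + C (σ := Fin 3) (R := k) α₀ * TT α₀ α₁ α₂ α₃)
      * (X 0 * X 2 + C (σ := Fin 3) (R := k) α₃ * X 1 ^ 2 + C (σ := Fin 3) (R := k) α₁ * X 1 ^ 2 * TT α₀ α₁ α₂ α₃)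

/-- preimage of `m²s` -/
noncomputable def Apre : MvPowerSeries (Fin 3) k :=
  invOfUnit (UU α₀ α₁ α₂ α₃) 1 * DD3 α₀ α₁ α₂ α₃

/-- preimage of `m³s` -/
noncomputable def Bpre : MvPowerSeries (Fin 3) k :=
  X 0 * X 2 + C (σ := Fin 3) (R := k) α₃ * X 1 ^ 2 + C (σ := Fin 3) (R := k) α₁ * X 1 ^ 2 * TT α₀ α₁ α₂ α₃
    + (C (σ := Fin 3) (R := k) α₂ + C (σ := Fin 3) (R := k) α₀ * TT α₀ α₁ α₂ α₃) * X 1 * Apre α₀ α₁ α₂ α₃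

lemma Phi_Apre [CharP k 2] :
    Phi α₀ α₁ α₂ α₃ (Apre α₀ α₁ α₂ α₃)
      = (X 1 : MvPowerSeries (Fin 2) k) ^ 2 * X 0 := by
  have h2 : (2 : MvPowerSeries (Fin 2) k) = 0 := two_eq_zero'
  set s : MvPowerSeries (Fin 2) k := X 0 with hs
  set m : MvPowerSeries (Fin 2) k := X 1 with hm
  set a0 : MvPowerSeries (Fin 2) k := C (σ := Fin 2) (R := k) α₀ with ha0
  set a1 : MvPowerSeries (Fin 2) k := C (σ := Fin 2) (R := k) α₁ with ha1
  set a2 : MvPowerSeries (Fin 2) k := C (σ := Fin 2) (R := k) α₂ with ha2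
  set a3 : MvPowerSeries (Fin 2) k := C (σ := Fin 2) (R := k) α₃ with ha3
  set xv : MvPowerSeries (Fin 2) k := xx α₀ α₁ α₂ α₃ with hxv
  have hx : xv = s + m * (a3 + a2 * s + a1 * s ^ 2 + a0 * s ^ 3) := by
    rw [hxv, xx, gg]
  -- image of the unit
  have hU : Phi α₀ α₁ α₂ α₃ (UU α₀ α₁ α₂ α₃) = 1 + (a2 + a0 * s ^ 2) ^ 2 * m ^ 2 := by
    rw [UU]
    simp only [map_add, map_mul, map_pow, map_one, Phi_X1, Phi_C, Phi_TT]
    rfl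
  have hD : Phi α₀ α₁ α₂ α₃ (DD3 α₀ α₁ α₂ α₃)
      = xv * m ^ 2 + a3 * m ^ 3 + a1 * m ^ 3 * s ^ 2
        + (a2 + a0 * s ^ 2) * (xv * m ^ 3 + a3 * (m ^ 2) ^ 2 + a1 * (m ^ 2) ^ 2 * s ^ 2) := by
    rw [DD3]
    simp only [map_add, map_mul, map_pow, Phi_X0, Phi_X1, Phi_X2, Phi_C, Phi_TT]
    rfl
  -- the key identity : U * (m² s) = D
  have idA : (1 + (a2 + a0 * s ^ 2) ^ 2 * m ^ 2) * (m ^ 2 * s)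
      = xv * m ^ 2 + a3 * m ^ 3 + a1 * m ^ 3 * s ^ 2
        + (a2 + a0 * s ^ 2) * (xv * m ^ 3 + a3 * (m ^ 2) ^ 2 + a1 * (m ^ 2) ^ 2 * s ^ 2) := by
    rw [hx]
    linear_combination (-(m^3*a3 + m^4*a2*a3 + s*m^3*a2 + s^2*m^3*a1 + s^2*m^4*a1*a2
      + s^2*m^4*a0*a3 + s^3*m^3*a0 + s^4*m^4*a0*a1)) * h2
  -- unit equation
  have hunit : UU α₀ α₁ α₂ α₃ * invOfUnit (UU α₀ α₁ α₂ α₃) 1 = 1 :=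
    mul_invOfUnit _ 1 (by rw [constantCoeff_UU]; rfl)
  have hunit2 : (1 + (a2 + a0 * s ^ 2) ^ 2 * m ^ 2)
      * Phi α₀ α₁ α₂ α₃ (invOfUnit (UU α₀ α₁ α₂ α₃) 1) = 1 := by
    rw [← hU, ← map_mul, hunit, map_one]
  rw [Apre, map_mul, hD, ← idA]
  calc Phi α₀ α₁ α₂ α₃ (invOfUnit (UU α₀ α₁ α₂ α₃) 1)
        * ((1 + (a2 + a0 * s ^ 2) ^ 2 * m ^ 2) * (m ^ 2 * s))
      = ((1 + (a2 + a0 * s ^ 2) ^ 2 * m ^ 2)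
          * Phi α₀ α₁ α₂ α₃ (invOfUnit (UU α₀ α₁ α₂ α₃) 1)) * (m ^ 2 * s) := by ring
    _ = m ^ 2 * s := by rw [hunit2, one_mul]

lemma Phi_Bpre [CharP k 2] :
    Phi α₀ α₁ α₂ α₃ (Bpre α₀ α₁ α₂ α₃)
      = (X 1 : MvPowerSeries (Fin 2) k) ^ 3 * X 0 := by
  have h2 : (2 : MvPowerSeries (Fin 2) k) = 0 := two_eq_zero'
  set s : MvPowerSeries (Fin 2) k := X 0 with hs
  set m : MvPowerSeries (Fin 2) k := X 1 with hm
  set a0 : MvPowerSeries (Fin 2) k := C (σ := Fin 2) (R := k) α₀ with ha0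
  set a1 : MvPowerSeries (Fin 2) k := C (σ := Fin 2) (R := k) α₁ with ha1
  set a2 : MvPowerSeries (Fin 2) k := C (σ := Fin 2) (R := k) α₂ with ha2
  set a3 : MvPowerSeries (Fin 2) k := C (σ := Fin 2) (R := k) α₃ with ha3
  have hx : xx α₀ α₁ α₂ α₃ = s + m * (a3 + a2 * s + a1 * s ^ 2 + a0 * s ^ 3) := by
    rw [xx, gg]
  rw [Bpre]
  simp only [map_add, map_mul, map_pow, Phi_X0, Phi_X1, Phi_X2, Phi_C, Phi_TT,
    Phi_Apre]
  rw [hx]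
  linear_combination (m^4*a3 + s*m^4*a2 + s^2*m^4*a1 + s^3*m^4*a0) * h2

end Preimages
section KernelPrep

variable (α₀ α₁ α₂ α₃ : k)

/-- the weight giving the `m`-degree -/
def κ01 : Fin 2 → ℕ := ![0, 1]

lemma wtd_κ01 (e : Fin 2 →₀ ℕ) : wtd κ01 e = e 1 := by
  simp [wtd, κ01, Fin.sum_univ_two]

lemma VB_κ01_X1 : VB (k := k) κ01 1 (X 1 : MvPowerSeries (Fin 2) k) := by
  rw [show (X 1 : MvPowerSeries (Fin 2) k) = monomial (R := k) (Finsupp.single 1 1) 1 from rfl]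
  apply VB_monomial
  rw [wtd_κ01, Finsupp.single_eq_same]

/-- the `m`-degree lower bound for `Wm` -/
lemma coeff_Wm_mdeg {e : Fin 2 →₀ ℕ} {d : Fin 3 →₀ ℕ} (h : e 1 < 2 * d 1 + 3 * d 2) :
    coeff (R := k) e (Wm α₀ α₁ α₂ α₃ d) = 0 := by
  have h1 : VB (k := k) κ01 0 (xx α₀ α₁ α₂ α₃ ^ d 0) := VB_zero' κ01 _
  have h2 := VB_pow (VB_κ01_X1 (k := k)) (2 * d 1 + 3 * d 2)
  rw [Nat.mul_one] at h2
  have := VB_mul h1 h2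
  rw [Nat.zero_add] at this
  apply this
  rwa [wtd_κ01]

/-- coefficient of `s^p` in `xx^a` -/
lemma coeff_xx_pow (a p : ℕ) :
    coeff (R := k) (Finsupp.single 0 p) (xx α₀ α₁ α₂ α₃ ^ a) = if a = p then 1 else 0 := by
  induction a generalizing p with
  | zero =>
    rw [pow_zero, coeff_one]
    by_cases hp : p = 0
    · subst hp; simp
    · rw [if_neg (by simpa [Finsupp.single_eq_zero] using hp), if_neg (by omega)]
  | succ a ih =>
    have hsplit : xx α₀ α₁ α₂ α₃ ^ (a + 1)
        = xx α₀ α₁ α₂ α₃ ^ a * X 0 + xx α₀ α₁ α₂ α₃ ^ a * (X 1 * gg α₀ α₁ α₂ α₃) := by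
      rw [pow_succ]
      nth_rewrite 2 [show xx α₀ α₁ α₂ α₃ = X 0 + X 1 * gg α₀ α₁ α₂ α₃ from rfl]
      ring
    rw [hsplit, map_add]
    have hsecond : coeff (R := k) (Finsupp.single 0 p)
        (xx α₀ α₁ α₂ α₃ ^ a * ((X 1 : MvPowerSeries (Fin 2) k) * gg α₀ α₁ α₂ α₃)) = 0 := by
      have hX1g : VB (k := k) κ01 1 ((X 1 : MvPowerSeries (Fin 2) k) * gg α₀ α₁ α₂ α₃) := by
        have := VB_mul (VB_κ01_X1 (k := k)) (VB_zero' κ01 (gg α₀ α₁ α₂ α₃))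
        simpa using this
      have := VB_mul (VB_zero' (k := k) κ01 (xx α₀ α₁ α₂ α₃ ^ a)) hX1g
      apply this
      rw [wtd_κ01, Finsupp.single_apply, if_neg (by decide : ¬ ((0 : Fin 2) = 1))]
      omega
    rw [hsecond, add_zero]
    rw [show (X 0 : MvPowerSeries (Fin 2) k) = monomial (R := k) (Finsupp.single 0 1) 1 from rfl]
    rw [coeff_mul_monomial]
    by_cases hp : 1 ≤ p
    · rw [if_pos (Finsupp.single_le_iff.mpr (by rwa [Finsupp.single_eq_same]))]
      have hsub : Finsupp.single (0 : Fin 2) p - Finsupp.single 0 1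
          = Finsupp.single 0 (p - 1) := by
        ext i
        rw [Finsupp.tsub_apply]
        by_cases hi : i = 0
        · subst hi; rw [Finsupp.single_eq_same, Finsupp.single_eq_same, Finsupp.single_eq_same]
        · rw [Finsupp.single_eq_of_ne' (Ne.symm hi), Finsupp.single_eq_of_ne' (Ne.symm hi),
            Finsupp.single_eq_of_ne' (Ne.symm hi)]
          omega
      rw [hsub, ih (p - 1), mul_one]
      by_cases ha : a = p - 1
      · rw [if_pos ha, if_pos (by omega)]
      · rw [if_neg ha, if_neg (by omega)]
    · rw [if_neg (by rw [Finsupp.single_le_iff, Finsupp.single_eq_same]; omega),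
        if_neg (by omega)]

/-- two-variable exponent constructor -/
noncomputable def mk2 (p q : ℕ) : Fin 2 →₀ ℕ := Finsupp.single 0 p + Finsupp.single 1 q

lemma mk2_apply0 (p q : ℕ) : mk2 p q 0 = p := by
  simp [mk2, Finsupp.add_apply, Finsupp.single_apply]

lemma mk2_apply1 (p q : ℕ) : mk2 p q 1 = q := by
  simp [mk2, Finsupp.add_apply, Finsupp.single_apply]

lemma deg2_mk2 (p q : ℕ) : deg2 (mk2 p q) = p + q := by
  rw [deg2_eq, mk2_apply0, mk2_apply1]

/-- on-diagonal coefficients of `Wm` -/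
lemma coeff_Wm_diag {p b : ℕ} {d : Fin 3 →₀ ℕ} (hb : 2 * d 1 + 3 * d 2 = b) :
    coeff (R := k) (mk2 p b) (Wm α₀ α₁ α₂ α₃ d) = if d 0 = p then 1 else 0 := by
  rw [Wm, hb, X_pow_eq, coeff_mul_monomial]
  rw [if_pos (Finsupp.single_le_iff.mpr (by rw [mk2_apply1]))]
  have hsub : mk2 p b - Finsupp.single 1 b = Finsupp.single 0 p := by
    ext i
    fin_cases i <;>
      simp [mk2, Finsupp.tsub_apply, Finsupp.add_apply, Finsupp.single_apply]
  rw [hsub, coeff_xx_pow, mul_one]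

/-- three-variable exponent constructor -/
noncomputable def mk3 (a b c : ℕ) : Fin 3 →₀ ℕ :=
  Finsupp.single 0 a + Finsupp.single 1 b + Finsupp.single 2 c

lemma mk3_apply0 (a b c : ℕ) : mk3 a b c 0 = a := by
  simp [mk3, Finsupp.add_apply, Finsupp.single_apply]

lemma mk3_apply1 (a b c : ℕ) : mk3 a b c 1 = b := by
  simp [mk3, Finsupp.add_apply, Finsupp.single_apply]

lemma mk3_apply2 (a b c : ℕ) : mk3 a b c 2 = c := by
  simp [mk3, Finsupp.add_apply, Finsupp.single_apply]

lemma mk3_self (e : Fin 3 →₀ ℕ) : mk3 (e 0) (e 1) (e 2) = e := by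
  ext i
  fin_cases i
  · exact mk3_apply0 _ _ _
  · exact mk3_apply1 _ _ _
  · exact mk3_apply2 _ _ _

end KernelPrep
section Division

variable (α₀ α₁ α₂ α₃ : k)

/-- quotient of division by `Y³ + Z²` -/
noncomputable def Qf (F : MvPowerSeries (Fin 3) k) : MvPowerSeries (Fin 3) k :=
  fun e => ∑ t ∈ Finset.range (e 1 / 3 + 1),
    coeff (R := k) (mk3 (e 0) (e 1 - 3 * t) (e 2 + 2 + 2 * t)) F

/-- remainder of division by `Y³ + Z²` -/
noncomputable def Rf (F : MvPowerSeries (Fin 3) k) : MvPowerSeries (Fin 3) k :=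
  fun e => if e 2 ≤ 1 then
    ∑ t ∈ Finset.range (e 1 / 3 + 1), coeff (R := k) (mk3 (e 0) (e 1 - 3 * t) (e 2 + 2 * t)) F
  else 0

lemma coeff_Qf (F : MvPowerSeries (Fin 3) k) (e : Fin 3 →₀ ℕ) :
    coeff (R := k) e (Qf F) = ∑ t ∈ Finset.range (e 1 / 3 + 1),
      coeff (R := k) (mk3 (e 0) (e 1 - 3 * t) (e 2 + 2 + 2 * t)) F := rfl

lemma coeff_Rf (F : MvPowerSeries (Fin 3) k) (e : Fin 3 →₀ ℕ) :
    coeff (R := k) e (Rf F) = if e 2 ≤ 1 then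
      ∑ t ∈ Finset.range (e 1 / 3 + 1), coeff (R := k) (mk3 (e 0) (e 1 - 3 * t) (e 2 + 2 * t)) F
    else 0 := rfl

lemma coeff_Rf_high (F : MvPowerSeries (Fin 3) k) {e : Fin 3 →₀ ℕ} (h : 2 ≤ e 2) :
    coeff (R := k) e (Rf F) = 0 := by
  rw [coeff_Rf, if_neg (by omega)]

lemma sub_single_apply (e : Fin 3 →₀ ℕ) (i j : Fin 3) (n : ℕ) :
    (e - Finsupp.single i n) j = e j - Finsupp.single i n j := Finsupp.tsub_apply _ _ _

lemma division [CharP k 2] (F : MvPowerSeries (Fin 3) k) :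
    ((X 1 : MvPowerSeries (Fin 3) k) ^ 3 + (X 2 : MvPowerSeries (Fin 3) k) ^ 2) * Qf F
      = F + Rf F := by
  have two0 : (2 : k) = 0 := CharTwo.two_eq_zero
  apply MvPowerSeries.ext; intro e
  rw [X_pow_eq, X_pow_eq, add_mul, map_add, coeff_monomial_mul, coeff_monomial_mul,
    map_add, coeff_Rf]
  have hc1 : (Finsupp.single (1 : Fin 3) 3 ≤ e) ↔ 3 ≤ e 1 := Finsupp.single_le_iff
  have hc2 : (Finsupp.single (2 : Fin 3) 2 ≤ e) ↔ 2 ≤ e 2 := Finsupp.single_le_iff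
  set S : ℕ → k := fun t => coeff (R := k) (mk3 (e 0) (e 1 - 3 * t) (e 2 + 2 * t)) F with hS
  have hS0 : S 0 = coeff (R := k) e F := by
    rw [hS]
    norm_num
    rw [mk3_self]
  -- evaluate the first quotient coefficient
  have hterm1 : 3 ≤ e 1 → coeff (R := k) (e - Finsupp.single 1 3) (Qf F)
      = ∑ t ∈ Finset.range (e 1 / 3), S (t + 1) := by
    intro h3
    rw [coeff_Qf]
    have ha0 : ((e - Finsupp.single (1:Fin 3) 3 : Fin 3 →₀ ℕ)) 0 = e 0 := by
      rw [Finsupp.tsub_apply, Finsupp.single_eq_of_ne (by decide)]; omega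
    have ha1 : ((e - Finsupp.single (1:Fin 3) 3 : Fin 3 →₀ ℕ)) 1 = e 1 - 3 := by
      rw [Finsupp.tsub_apply, Finsupp.single_eq_same]
    have ha2 : ((e - Finsupp.single (1:Fin 3) 3 : Fin 3 →₀ ℕ)) 2 = e 2 := by
      rw [Finsupp.tsub_apply, Finsupp.single_eq_of_ne (by decide)]; omega
    rw [ha0, ha1, ha2]
    have hrange : (e 1 - 3) / 3 + 1 = e 1 / 3 := by omega
    rw [hrange]
    refine Finset.sum_congr rfl fun t _ => ?_
    rw [hS]
    have h1 : e 1 - 3 - 3 * t = e 1 - 3 * (t + 1) := by omega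
    have h2 : e 2 + 2 + 2 * t = e 2 + 2 * (t + 1) := by omega
    rw [h1, h2]
  -- evaluate the second quotient coefficient
  have hterm2 : 2 ≤ e 2 → coeff (R := k) (e - Finsupp.single 2 2) (Qf F)
      = ∑ t ∈ Finset.range (e 1 / 3 + 1), S t := by
    intro h2
    rw [coeff_Qf]
    have ha0 : ((e - Finsupp.single (2:Fin 3) 2 : Fin 3 →₀ ℕ)) 0 = e 0 := by
      rw [Finsupp.tsub_apply, Finsupp.single_eq_of_ne (by decide)]; omega
    have ha1 : ((e - Finsupp.single (2:Fin 3) 2 : Fin 3 →₀ ℕ)) 1 = e 1 := by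
      rw [Finsupp.tsub_apply, Finsupp.single_eq_of_ne (by decide)]; omega
    have ha2 : ((e - Finsupp.single (2:Fin 3) 2 : Fin 3 →₀ ℕ)) 2 = e 2 - 2 := by
      rw [Finsupp.tsub_apply, Finsupp.single_eq_same]
    rw [ha0, ha1, ha2]
    refine Finset.sum_congr rfl fun t _ => ?_
    rw [hS]
    have h1 : e 2 - 2 + 2 + 2 * t = e 2 + 2 * t := by omega
    rw [h1]
  have hsplit : ∑ t ∈ Finset.range (e 1 / 3 + 1), S t
      = (∑ t ∈ Finset.range (e 1 / 3), S (t + 1)) + S 0 := Finset.sum_range_succ' S (e 1 / 3)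
  by_cases h3 : 3 ≤ e 1 <;> by_cases h2 : 2 ≤ e 2
  · rw [if_pos (hc1.mpr h3), if_pos (hc2.mpr h2), if_neg (by omega), one_mul, one_mul,
      hterm1 h3, hterm2 h2, hsplit, hS0, add_zero]
    linear_combination (∑ t ∈ Finset.range (e 1 / 3), S (t + 1)) * two0
  · rw [if_pos (hc1.mpr h3), if_neg (fun h => h2 (hc2.mp h)), if_pos (by omega), one_mul,
      hterm1 h3, add_zero, hsplit, hS0]
    linear_combination (-(coeff (R := k) e F)) * two0
  · rw [if_neg (fun h => h3 (hc1.mp h)), if_pos (hc2.mpr h2), if_neg (by omega), one_mul,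
      hterm2 h2, hsplit, hS0, add_zero, zero_add]
    have hj3 : e 1 / 3 = 0 := by omega
    rw [hj3]
    simp
  · rw [if_neg (fun h => h3 (hc1.mp h)), if_neg (fun h => h2 (hc2.mp h)), if_pos (by omega),
      hsplit, hS0]
    have hj3 : e 1 / 3 = 0 := by omega
    rw [hj3]
    simp only [Finset.range_zero, Finset.sum_empty, zero_add, add_zero]
    linear_combination (-(coeff (R := k) e F)) * two0

end Division
section Kernel

variable (α₀ α₁ α₂ α₃ : k)

/-- a series supported on `Z`-degree `≤ 1` that maps to `0` is `0` -/
lemma remainder_zero (G : MvPowerSeries (Fin 3) k)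
    (hsupp : ∀ e : Fin 3 →₀ ℕ, 2 ≤ e 2 → coeff (R := k) e G = 0)
    (hzero : Phi α₀ α₁ α₂ α₃ G = 0) : G = 0 := by
  have main : ∀ n : ℕ, ∀ e : Fin 3 →₀ ℕ, 2 * e 1 + 3 * e 2 = n → coeff (R := k) e G = 0 := by
    intro n
    induction n using Nat.strong_induction_on with
    | _ n IH =>
      intro e he
      by_cases h2e : 2 ≤ e 2
      · exact hsupp e h2e
      push_neg at h2e
      have h0 : coeff (R := k) (mk2 (e 0) n) (Phi α₀ α₁ α₂ α₃ G) = 0 := by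
        rw [hzero, map_zero]
      have hcoeff : coeff (R := k) (mk2 (e 0) n) (Phi α₀ α₁ α₂ α₃ G)
          = ∑ d ∈ DD (deg2 (mk2 (e 0) n)),
              coeff (R := k) d G * coeff (R := k) (mk2 (e 0) n) (Wm α₀ α₁ α₂ α₃ d) :=
        coeff_phiFun α₀ α₁ α₂ α₃ G (mk2 (e 0) n)
      rw [hcoeff, deg2_mk2] at h0
      have heDD : e ∈ DD (e 0 + n) := by
        rw [mem_DD]
        intro i
        fin_cases i
        · show e 0 ≤ e 0 + n; omega
        · show e 1 ≤ e 0 + n; omega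
        · show e 2 ≤ e 0 + n; omega
      rw [Finset.sum_eq_single e] at h0
      · rwa [coeff_Wm_diag α₀ α₁ α₂ α₃ (by omega), if_pos rfl, mul_one] at h0
      · intro d _ hne
        by_cases hgt : n < 2 * d 1 + 3 * d 2
        · rw [coeff_Wm_mdeg α₀ α₁ α₂ α₃ (by rw [mk2_apply1]; omega), mul_zero]
        by_cases hlt : 2 * d 1 + 3 * d 2 < n
        · rw [IH (2 * d 1 + 3 * d 2) (by omega) d rfl, zero_mul]
        -- the diagonal case
        have heq : 2 * d 1 + 3 * d 2 = n := by omega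
        by_cases hd2 : 2 ≤ d 2
        · rw [hsupp d hd2, zero_mul]
        push_neg at hd2
        have hd2e : d 2 = e 2 := by omega
        have hd1e : d 1 = e 1 := by omega
        have hd0 : d 0 ≠ e 0 := by
          intro h
          apply hne
          ext i
          fin_cases i
          · exact h
          · exact hd1e
          · exact hd2e
        rw [coeff_Wm_diag α₀ α₁ α₂ α₃ heq, if_neg hd0, mul_zero]
      · intro habs
        exact absurd heDD habs
  apply MvPowerSeries.ext
  intro e
  rw [map_zero]
  exact main (2 * e 1 + 3 * e 2) e rfl

lemma Phi_P3_eq_zero [CharP k 2] :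
    Phi α₀ α₁ α₂ α₃ ((X 1 : MvPowerSeries (Fin 3) k) ^ 3 + (X 2) ^ 2) = 0 := by
  have h2 : (2 : MvPowerSeries (Fin 2) k) = 0 := two_eq_zero'
  rw [map_add, map_pow, map_pow, Phi_X1, Phi_X2]
  linear_combination ((X 1 : MvPowerSeries (Fin 2) k) ^ 6) * h2

lemma ker_Phi [CharP k 2] :
    RingHom.ker (Phi α₀ α₁ α₂ α₃)
      = Ideal.span {(X 1 : MvPowerSeries (Fin 3) k) ^ 3 + (X 2) ^ 2} := by
  apply le_antisymm
  · intro F hF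
    rw [RingHom.mem_ker] at hF
    have hdiv := division F
    have hRf : Phi α₀ α₁ α₂ α₃ (Rf F) = 0 := by
      have happ := congrArg (Phi α₀ α₁ α₂ α₃) hdiv
      rw [map_mul, Phi_P3_eq_zero, zero_mul, map_add, hF, zero_add] at happ
      exact happ.symm
    have hR0 : Rf F = 0 :=
      remainder_zero α₀ α₁ α₂ α₃ (Rf F) (fun e he => coeff_Rf_high F he) hRf
    rw [hR0, add_zero] at hdiv
    rw [Ideal.mem_span_singleton]
    exact ⟨Qf F, hdiv.symm⟩
  · rw [Ideal.span_le]
    rintro f hf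
    rw [Set.mem_singleton_iff] at hf
    subst hf
    rw [SetLike.mem_coe, RingHom.mem_ker]
    exact Phi_P3_eq_zero α₀ α₁ α₂ α₃

end Kernel
end Stmt9Aux

open MvPowerSeries in
/-- The complete local ring `k[[u⁻², u⁻¹+vu⁻⁴P, v²u⁻², v²u⁻³, v³u⁻³, v³u⁻⁴]]` is isomorphic to
`k[[x,y,z]]/(y³+z²)` via `x = u⁻¹+vu⁻⁴P`, `y = v²u⁻²`, `z = v³u⁻³`.  With `s = u⁻¹`,
`m = vu⁻¹`, this is expressed by a (substitution) homomorphism `φ : k[[X,Y,Z]] → k[[s,m]]`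
with `φ(X) = x`, `φ(Y) = y`, `φ(Z) = z`, whose kernel is `(Y³+Z²)` and whose image contains
all six generators. -/
theorem stmt9 (k : Type) [Field k] [CharP k 2] (α₀ α₁ α₂ α₃ : k) (hα₀ : α₀ ≠ 0) :
    letI s : MvPowerSeries (Fin 2) k := X 0
    letI m : MvPowerSeries (Fin 2) k := X 1
    letI x : MvPowerSeries (Fin 2) k :=
      s + m * (C (σ := Fin 2) (R := k) α₃ + C (σ := Fin 2) (R := k) α₂ * s + C (σ := Fin 2) (R := k) α₁ * s ^ 2
        + C (σ := Fin 2) (R := k) α₀ * s ^ 3)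
    letI y : MvPowerSeries (Fin 2) k := m ^ 2
    letI z : MvPowerSeries (Fin 2) k := m ^ 3
    ∃ φ : MvPowerSeries (Fin 3) k →+* MvPowerSeries (Fin 2) k,
      (∀ a : k, φ (C (σ := Fin 3) (R := k) a) = C (σ := Fin 2) (R := k) a) ∧
      φ (X 0) = x ∧ φ (X 1) = y ∧ φ (X 2) = z ∧
      RingHom.ker φ = Ideal.span {(X 1) ^ 3 + (X 2) ^ 2} ∧
      s ^ 2 ∈ Set.range φ ∧ m ^ 2 * s ∈ Set.range φ ∧ m ^ 3 * s ∈ Set.range φ := by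
  refine ⟨Stmt9Aux.Phi α₀ α₁ α₂ α₃,
    fun a => Stmt9Aux.Phi_C α₀ α₁ α₂ α₃ a,
    ?_,
    Stmt9Aux.Phi_X1 α₀ α₁ α₂ α₃,
    Stmt9Aux.Phi_X2 α₀ α₁ α₂ α₃,
    Stmt9Aux.ker_Phi α₀ α₁ α₂ α₃,
    ⟨Stmt9Aux.TT α₀ α₁ α₂ α₃, Stmt9Aux.Phi_TT α₀ α₁ α₂ α₃⟩,
    ⟨Stmt9Aux.Apre α₀ α₁ α₂ α₃, Stmt9Aux.Phi_Apre α₀ α₁ α₂ α₃⟩,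
    ⟨Stmt9Aux.Bpre α₀ α₁ α₂ α₃, Stmt9Aux.Phi_Bpre α₀ α₁ α₂ α₃⟩⟩
  rw [Stmt9Aux.Phi_X0, Stmt9Aux.xx, Stmt9Aux.gg]
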